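/- Let L be a Lie algebra, let x, y ∈ L, and suppose [(ad x)^k(y), (ad x)^l(y)] = 0 for all k, l ∈ ℕ. Then the Lie subalgebra of L generated by {x, y} is solvable; in fact its derived subalgebra is abelian. -/

import Mathlib

/-- If all the elements `(ad x)^k y` commute pairwise, then the Lie subalgebra
generated by `{x, y}` is solvable; in fact its derived subalgebra is abelian. -/
theorem solvable_of_ad_pow_commute
    (K : Type*) [Field K]
    (L : Type*) [LieRing L] [LieAlgebra K L]
    (x y : L)
    (H : ∀ k l : ℕ,
      ⁅((LieAlgebra.ad K L x : Module.End K L) ^ k) y,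
        ((LieAlgebra.ad K L x : Module.End K L) ^ l) y⁆ = 0) :
    LieAlgebra.IsSolvable (LieSubalgebra.lieSpan K L {x, y}) ∧
    IsLieAbelian
      (LieAlgebra.derivedSeries K (LieSubalgebra.lieSpan K L {x, y}) 1) := by
  set c : ℕ → L := fun k => ((LieAlgebra.ad K L x : Module.End K L) ^ k) y with hc
  set C : Submodule K L := Submodule.span K (Set.range c) with hCdef
  -- brackets of generators
  have hxck : ∀ k, ⁅x, c k⁆ = c (k + 1) := by
    intro k
    simp only [hc, pow_succ', Module.End.mul_apply, LieAlgebra.ad_apply]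
  -- C is abelian
  have hCC : ∀ a ∈ C, ∀ b ∈ C, ⁅a, b⁆ = 0 := by
    intro a ha b hb
    induction ha using Submodule.span_induction with
    | mem a ha =>
      obtain ⟨k, rfl⟩ := ha
      induction hb using Submodule.span_induction with
      | mem b hb => obtain ⟨l, rfl⟩ := hb; exact H k l
      | zero => simp
      | add u v _ _ hu hv => rw [lie_add, hu, hv, add_zero]
      | smul t u _ hu => rw [lie_smul, hu, smul_zero]
    | zero => simp
    | add u v _ _ hu hv => rw [add_lie, hu, hv, add_zero]
    | smul t u _ hu => rw [smul_lie, hu, smul_zero]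
  -- [x, C] ⊆ C
  have hxC : ∀ a ∈ C, ⁅x, a⁆ ∈ C := by
    intro a ha
    induction ha using Submodule.span_induction with
    | mem a ha =>
      obtain ⟨k, rfl⟩ := ha
      rw [hxck]; exact Submodule.subset_span ⟨k + 1, rfl⟩
    | zero => simp
    | add u v _ _ hu hv => rw [lie_add]; exact C.add_mem hu hv
    | smul t u _ hu => rw [lie_smul]; exact C.smul_mem t hu
  set M : Submodule K L := Submodule.span K ({x} ∪ Set.range c) with hMdef
  have hCM : C ≤ M := Submodule.span_mono Set.subset_union_right
  -- brackets of M land in C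
  have hMM : ∀ a ∈ M, ∀ b ∈ M, ⁅a, b⁆ ∈ C := by
    intro a ha b hb
    induction ha using Submodule.span_induction with
    | mem a ha =>
      have haux : ∀ b ∈ M, ⁅x, b⁆ ∈ C := by
        intro b hb
        induction hb using Submodule.span_induction with
        | mem b hb =>
          rcases hb with hb | ⟨k, rfl⟩
          · rw [Set.mem_singleton_iff] at hb; subst hb; simp
          · rw [hxck]; exact Submodule.subset_span ⟨k + 1, rfl⟩
        | zero => simp
        | add u v _ _ hu hv => rw [lie_add]; exact C.add_mem hu hv
        | smul t u _ hu => rw [lie_smul]; exact C.smul_mem t hu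
      rcases ha with ha | ⟨k, rfl⟩
      · rw [Set.mem_singleton_iff] at ha; subst ha; exact haux b hb
      · -- a = c k
        induction hb using Submodule.span_induction with
        | mem b hb =>
          rcases hb with hb | ⟨l, rfl⟩
          · rw [Set.mem_singleton_iff] at hb; subst hb
            rw [← lie_skew, hxck]
            exact C.neg_mem (Submodule.subset_span ⟨k + 1, rfl⟩)
          · rw [H k l]; exact C.zero_mem
        | zero => simp
        | add u v _ _ hu hv => rw [lie_add]; exact C.add_mem hu hv
        | smul t u _ hu => rw [lie_smul]; exact C.smul_mem t hu
    | zero => simp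
    | add u v _ _ hu hv => rw [add_lie]; exact C.add_mem (hu) (hv)
    | smul t u _ hu => rw [smul_lie]; exact C.smul_mem t (hu)
  -- M is a Lie subalgebra
  set MS : LieSubalgebra K L :=
    { M with lie_mem' := fun {a b} ha hb => hCM (hMM a ha b hb) } with hMS
  have hxM : x ∈ MS := Submodule.subset_span (Or.inl rfl)
  have hyM : y ∈ MS := by
    have : y = c 0 := by simp [hc]
    rw [this]; exact Submodule.subset_span (Or.inr ⟨0, rfl⟩)
  set S := LieSubalgebra.lieSpan K L {x, y} with hS
  have hSM : S ≤ MS := by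
    rw [hS, LieSubalgebra.lieSpan_le]
    intro z hz
    rcases hz with rfl | hz
    · exact hxM
    · rw [Set.mem_singleton_iff] at hz; subst hz; exact hyM
  -- brackets of elements of S land in C
  have key : ∀ a b : S, (⁅a, b⁆ : L) ∈ C := by
    intro a b
    exact hMM _ (hSM a.2) _ (hSM b.2)
  -- elements of derived subalgebra land in C
  have hD : ∀ z ∈ LieAlgebra.derivedSeries K S 1, (z : L) ∈ C := by
    intro z hz
    have h1 : LieAlgebra.derivedSeries K S 1 = ⁅(⊤ : LieIdeal K S), (⊤ : LieIdeal K S)⁆ := by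
      rw [LieAlgebra.derivedSeries_def, LieAlgebra.derivedSeriesOfIdeal_succ,
        LieAlgebra.derivedSeriesOfIdeal_zero]
    rw [h1, ← LieSubmodule.mem_toSubmodule, LieSubmodule.lieIdeal_oper_eq_linear_span'] at hz
    induction hz using Submodule.span_induction with
    | mem w hw =>
      obtain ⟨u, -, v, -, rfl⟩ := hw
      exact key u v
    | zero => simp
    | add u v _ _ hu hv => exact C.add_mem hu hv
    | smul t u _ hu => exact C.smul_mem t hu
  have habs : IsLieAbelian (LieAlgebra.derivedSeries K S 1) := by
    constructor
    intro a b
    have : ((⁅a, b⁆ : LieAlgebra.derivedSeries K S 1) : L) = ⁅((a : S) : L), ((b : S) : L)⁆ :=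
      rfl
    have hz : ((⁅a, b⁆ : LieAlgebra.derivedSeries K S 1) : L) = 0 := by
      rw [this]
      exact hCC _ (hD _ a.2) _ (hD _ b.2)
    ext
    exact hz
  refine ⟨?_, habs⟩
  refine (LieAlgebra.isSolvable_iff K _).mpr ⟨2, ?_⟩
  have := (LieAlgebra.abelian_iff_derived_succ_eq_bot (⊤ : LieIdeal K S) 1).mp ?_
  · rw [LieAlgebra.derivedSeries_def]
    exact this
  · rw [← LieAlgebra.derivedSeries_def]
    exact habs
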